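/- Let k ≥ 1 be a natural number. The constant (2k−1)²/4 in the power weight Hardy inequality on ℕ is sharp: for every real c > (2k−1)²/4 there exists a finitely supported function u : ℕ → ℂ with u(0) = 0 such that ∑_{n=1}^{∞} |u(n) − u(n−1)|² n^{2k} < c · ∑_{n=1}^{∞} (|u(n)|²/n²) · n^{2k}. -/

import Mathlib

open scoped BigOperators

open Real Finset

/-- Bernoulli-type: `(1+h)^(-a) ≥ 1 - a*h` for `a, h ≥ 0`. -/
lemma aux_bernoulli {a h : ℝ} (ha : 0 ≤ a) (hh : 0 ≤ h) :
    1 - a * h ≤ (1 + h) ^ (-a) := by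
  rcases le_or_gt 1 (a * h) with hah | hah
  · have : (0:ℝ) ≤ (1 + h) ^ (-a) := Real.rpow_nonneg (by linarith) _
    linarith
  · have h1 : (1 + h : ℝ) ^ (-a) = ((1 + h) ^ a)⁻¹ := Real.rpow_neg (by linarith) a
    have h2 : (1 + h) ^ a ≤ Real.exp (a * h) := by
      calc (1 + h) ^ a ≤ (Real.exp h) ^ a := by
            apply Real.rpow_le_rpow (by linarith)
            · linarith [Real.add_one_le_exp h]
            · exact ha
        _ = Real.exp (h * a) := (Real.exp_mul h a).symm
        _ = Real.exp (a * h) := by ring_nf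
    have hpos : (0:ℝ) < (1 + h) ^ a := Real.rpow_pos_of_pos (by linarith) a
    have h3 : ((1 + h) ^ a)⁻¹ ≥ (Real.exp (a * h))⁻¹ :=
      inv_anti₀ hpos h2
    have h4 : 1 - a * h ≤ (Real.exp (a * h))⁻¹ := by
      rw [← Real.exp_neg]
      linarith [Real.add_one_le_exp (-(a * h))]
    rw [h1]; linarith
/-- difference of negative powers, upper bound -/
lemma aux_rpow_diff_le {a x : ℝ} (ha : 0 ≤ a) (hx : 1 ≤ x) :
    x ^ (-a) - (x + 1) ^ (-a) ≤ a * x ^ (-a - 1) := by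
  have hx0 : (0:ℝ) < x := by linarith
  have hinv : (0:ℝ) ≤ 1 / x := by positivity
  have key : 1 - a * (1 / x) ≤ (1 + 1 / x) ^ (-a) := aux_bernoulli ha hinv
  have hxx : (x + 1) ^ (-a) = x ^ (-a) * (1 + 1/x) ^ (-a) := by
    rw [← Real.mul_rpow (le_of_lt hx0) (by positivity)]
    congr 1
    field_simp
  have hxa : (0:ℝ) ≤ x ^ (-a) := Real.rpow_nonneg (le_of_lt hx0) _
  have h5 : x ^ (-a) * (1 - a * (1/x)) ≤ (x+1) ^ (-a) := by
    rw [hxx]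
    exact mul_le_mul_of_nonneg_left key hxa
  have h6 : x ^ (-a) - (x+1)^(-a) ≤ x ^ (-a) * (a * (1/x)) := by nlinarith
  calc x ^ (-a) - (x+1)^(-a) ≤ x ^ (-a) * (a * (1/x)) := h6
    _ = a * (x ^ (-a) * x⁻¹) := by ring
    _ = a * x ^ (-a - 1) := by
        rw [← Real.rpow_neg_one x, ← Real.rpow_add hx0]
        ring_nf
/-- difference of negative powers is nonneg -/
lemma aux_rpow_diff_nonneg {a x : ℝ} (ha : 0 ≤ a) (hx : 0 < x) :
    0 ≤ x ^ (-a) - (x + 1) ^ (-a) := by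
  have : (x+1) ^ (-a) ≤ x ^ (-a) := by
    rw [Real.rpow_neg (by linarith), Real.rpow_neg (le_of_lt hx)]
    apply inv_anti₀ (Real.rpow_pos_of_pos hx a)
    exact Real.rpow_le_rpow (le_of_lt hx) (by linarith) ha
  linarith
/-- `(x+1)^(m+1) - x^(m+1) ≤ (m+1)*(x+1)^m` for `x ≥ 0` -/
lemma aux_pow_diff (m : ℕ) {x : ℝ} (hx : 0 ≤ x) :
    (x+1)^(m+1) - x^(m+1) ≤ (m+1) * (x+1)^m := by
  induction m with
  | zero => simp
  | succ m ih =>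
    have h1 : (x+1)^(m+2) - x^(m+2) = (x+1)^(m+1) + x * ((x+1)^(m+1) - x^(m+1)) := by ring
    have h2 : x * ((x+1)^(m+1) - x^(m+1)) ≤ x * ((m+1) * (x+1)^m) :=
      mul_le_mul_of_nonneg_left ih hx
    have h3 : x * ((m+1) * (x+1)^m) ≤ (m+1) * (x+1)^(m+1) := by
      have : x * (x+1)^m ≤ (x+1) * (x+1)^m := by nlinarith [pow_nonneg (by linarith : (0:ℝ) ≤ x+1) m]
      calc x * ((m+1) * (x+1)^m) = (m+1) * (x * (x+1)^m) := by ring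
        _ ≤ (m+1) * ((x+1) * (x+1)^m) := by
            apply mul_le_mul_of_nonneg_left this (by positivity)
        _ = (m+1) * (x+1)^(m+1) := by ring
    push_cast
    nlinarith [pow_nonneg (by linarith : (0:ℝ) ≤ x+1) (m+1)]
/-- sum of inverse squares bounded by 2 -/
lemma aux_sum_inv_sq (m : ℕ) : ∑ i ∈ range m, (1 / ((i:ℝ)+1)^2) ≤ 2 := by
  have key : ∀ m : ℕ, 1 ≤ m → ∑ i ∈ range m, (1 / ((i:ℝ)+1)^2) ≤ 2 - 1/(m:ℝ) := by
    intro m hm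
    induction m, hm using Nat.le_induction with
    | base => norm_num
    | succ m hm ih =>
      rw [Finset.sum_range_succ]
      have h1 : (0:ℝ) < (m:ℝ) := by exact_mod_cast hm
      have key2 : 1 / ((m:ℝ)+1)^2 ≤ 1/(m:ℝ) - 1/((m:ℝ)+1) := by
        rw [div_sub_div _ _ (ne_of_gt h1) (by positivity : ((m:ℝ)+1) ≠ 0)]
        rw [div_le_div_iff₀ (by positivity) (by positivity)]
        ring_nf
        nlinarith
      push_cast
      push_cast at ih key2
      linarith
  rcases Nat.eq_zero_or_pos m with hm | hm
  · subst hm; simp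
  · have := key m hm
    have h1 : (0:ℝ) < (m:ℝ) := by exact_mod_cast hm
    have : (0:ℝ) < 1/(m:ℝ) := by positivity
    linarith [key m hm]
/-- telescoping -/
lemma aux_tele (g : ℕ → ℝ) (N M : ℕ) (h : N ≤ M) :
    ∑ n ∈ Finset.Ico N M, (g n - g (n+1)) = g N - g M := by
  induction M with
  | zero => interval_cases N; simp
  | succ M ih =>
    rcases Nat.lt_or_ge N (M+1) with h' | h'
    · have hNM : N ≤ M := Nat.lt_succ_iff.mp h'
      rw [Finset.sum_Ico_succ_top hNM, ih hNM]
      ring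
    · have : N = M+1 := le_antisymm h h'
      subst this
      simp

lemma aux_sq_rpow {x : ℝ} (hx : 0 < x) (a : ℝ) : (x ^ a)^2 = x ^ (2*a) := by
  rw [sq, ← Real.rpow_add hx]; ring_nf

/-- the key fraction bound -/
lemma aux_frac (k : ℕ) {x : ℝ} (hx : 1 ≤ x) :
    (x+1)^(2*k) / x^(2*k+1) ≤ 1/(x+1) + (2*(k:ℝ)+1) * 4^k / x^2 := by
  have hx0 : (0:ℝ) < x := lt_of_lt_of_le one_pos hx
  have hP : (0:ℝ) < x^(2*k) := by positivity
  have hd : (x+1)^(2*k+1) ≤ x^(2*k+1) + (2*(k:ℝ)+1) * (x+1)^(2*k) := by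
    have := aux_pow_diff (2*k) (le_of_lt hx0)
    push_cast at this ⊢
    linarith
  have hb : (x+1)^(2*k) ≤ 4^k * x^(2*k) := by
    calc (x+1)^(2*k) ≤ (2*x)^(2*k) := by
          apply pow_le_pow_left₀ (by linarith) (by linarith)
      _ = 4^k * x^(2*k) := by
          rw [mul_pow, pow_mul]; norm_num
  calc (x+1)^(2*k) / x^(2*k+1) = (x+1)^(2*k+1) / (x^(2*k+1) * (x+1)) := by
        rw [pow_succ]
        rw [div_eq_div_iff (by positivity) (by positivity)]
        ring
    _ ≤ (x^(2*k+1) + (2*(k:ℝ)+1) * (x+1)^(2*k)) / (x^(2*k+1) * (x+1)) := by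
        gcongr
    _ = 1/(x+1) + (2*(k:ℝ)+1) * (x+1)^(2*k) / (x^(2*k+1) * (x+1)) := by
        rw [add_div]
        congr 1
        rw [pow_succ]
        field_simp
    _ ≤ 1/(x+1) + (2*(k:ℝ)+1) * (4^k * x^(2*k)) / (x^(2*k+1) * (x+1)) := by
        gcongr
    _ = 1/(x+1) + (2*(k:ℝ)+1) * 4^k / (x * (x+1)) := by
        congr 1
        rw [pow_succ]
        field_simp
    _ ≤ 1/(x+1) + (2*(k:ℝ)+1) * 4^k / x^2 := by
        have hxx : x^2 ≤ x*(x+1) := by nlinarith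
        gcongr ?_ + ?_
        · exact le_refl _
        · exact div_le_div_of_nonneg_left (by positivity) (by positivity) hxx

/-- main-region per-term bound -/
lemma aux_main_term (k n : ℕ) (hk : 1 ≤ k) (hn : 1 ≤ n) :
    ((n:ℝ) ^ (-((2*(k:ℝ)-1)/2)) - ((n:ℝ)+1) ^ (-((2*(k:ℝ)-1)/2)))^2 * ((n:ℝ)+1)^(2*k)
      ≤ ((2*(k:ℝ)-1)/2)^2 / ((n:ℝ)+1)
        + ((2*(k:ℝ)-1)/2)^2 * (2*(k:ℝ)+1) * 4^k / (n:ℝ)^2 := by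
  set s : ℝ := (2*(k:ℝ)-1)/2 with hs
  set x : ℝ := (n:ℝ) with hxdef
  have hx1 : (1:ℝ) ≤ x := by rw [hxdef]; exact_mod_cast hn
  have hx0 : (0:ℝ) < x := lt_of_lt_of_le one_pos hx1
  have hk1 : (1:ℝ) ≤ (k:ℝ) := by exact_mod_cast hk
  have hs0 : (0:ℝ) ≤ s := by rw [hs]; linarith
  have hd0 : 0 ≤ x^(-s) - (x+1)^(-s) := aux_rpow_diff_nonneg hs0 hx0
  have hd1 : x^(-s) - (x+1)^(-s) ≤ s * x^(-s-1) := aux_rpow_diff_le hs0 hx1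
  have ht0 : (0:ℝ) ≤ x^(-s-1) := Real.rpow_nonneg (le_of_lt hx0) _
  have hsq : (x^(-s) - (x+1)^(-s))^2 ≤ s^2 * (x^(-s-1))^2 := by
    have := pow_le_pow_left₀ hd0 hd1 2
    rw [mul_pow] at this
    exact this
  have hx2 : (x^(-s-1))^2 = 1 / x^(2*k+1) := by
    have h1 : (-s-1 : ℝ) = -(s+1) := by ring
    rw [h1, aux_sq_rpow hx0]
    have h2 : (2:ℝ)*(-(s+1)) = -(((2*k+1 : ℕ)):ℝ) := by
      rw [hs]; push_cast; ring
    rw [h2, Real.rpow_neg (le_of_lt hx0), Real.rpow_natCast, one_div]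
  have hfrac := aux_frac k hx1
  calc (x^(-s) - (x+1)^(-s))^2 * (x+1)^(2*k)
      ≤ s^2 * (x^(-s-1))^2 * (x+1)^(2*k) := by
        apply mul_le_mul_of_nonneg_right hsq (by positivity)
    _ = s^2 * ((x+1)^(2*k) / x^(2*k+1)) := by rw [hx2]; ring
    _ ≤ s^2 * (1/(x+1) + (2*(k:ℝ)+1) * 4^k / x^2) := by
        apply mul_le_mul_of_nonneg_left hfrac (sq_nonneg s)
    _ = s^2 / (x+1) + s^2 * (2*(k:ℝ)+1) * 4^k / x^2 := by ring

/-- tail-region per-term bound -/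
lemma aux_tail_term (k N n : ℕ) (hn : 1 ≤ n) :
    ((N:ℝ)^((3:ℝ)/2) * ((n:ℝ)+1)^(-((k:ℝ)+1)) - (N:ℝ)^((3:ℝ)/2) * (n:ℝ)^(-((k:ℝ)+1)))^2
        * ((n:ℝ)+1)^(2*k)
      ≤ ((k:ℝ)+1)^2 * 4^k * (N:ℝ)^3 / (n:ℝ)^4 := by
  set a : ℝ := (k:ℝ)+1 with ha
  set x : ℝ := (n:ℝ) with hxdef
  have hx1 : (1:ℝ) ≤ x := by rw [hxdef]; exact_mod_cast hn
  have hx0 : (0:ℝ) < x := lt_of_lt_of_le one_pos hx1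
  have ha0 : (0:ℝ) ≤ a := by positivity
  have hN0 : (0:ℝ) ≤ (N:ℝ) := Nat.cast_nonneg N
  have hd0 : 0 ≤ x^(-a) - (x+1)^(-a) := aux_rpow_diff_nonneg ha0 hx0
  have hd1 : x^(-a) - (x+1)^(-a) ≤ a * x^(-a-1) := aux_rpow_diff_le ha0 hx1
  have ht0 : (0:ℝ) ≤ x^(-a-1) := Real.rpow_nonneg (le_of_lt hx0) _
  have hNsq : ((N:ℝ)^((3:ℝ)/2))^2 = (N:ℝ)^3 := by
    rcases Nat.eq_zero_or_pos N with h | h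
    · subst h; push_cast
      rw [Real.zero_rpow (by norm_num)]; norm_num
    · have hN0' : (0:ℝ) < (N:ℝ) := by exact_mod_cast h
      rw [aux_sq_rpow hN0']
      have : (2:ℝ) * ((3:ℝ)/2) = ((3:ℕ):ℝ) := by norm_num
      rw [this, Real.rpow_natCast]
  have hsq : (x^(-a) - (x+1)^(-a))^2 ≤ a^2 * (x^(-a-1))^2 := by
    have := pow_le_pow_left₀ hd0 hd1 2
    rw [mul_pow] at this
    exact this
  have hx2 : (x^(-a-1))^2 = 1 / x^(2*k+4) := by
    have h1 : (-a-1 : ℝ) = -(a+1) := by ring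
    rw [h1, aux_sq_rpow hx0]
    have h2 : (2:ℝ)*(-(a+1)) = -(((2*k+4 : ℕ)):ℝ) := by
      rw [ha]; push_cast; ring
    rw [h2, Real.rpow_neg (le_of_lt hx0), Real.rpow_natCast, one_div]
  have hb : (x+1)^(2*k) ≤ 4^k * x^(2*k) := by
    calc (x+1)^(2*k) ≤ (2*x)^(2*k) := by
          apply pow_le_pow_left₀ (by linarith) (by linarith)
      _ = 4^k * x^(2*k) := by rw [mul_pow, pow_mul]; norm_num
  have hfactor : ((N:ℝ)^((3:ℝ)/2) * (x+1)^(-a) - (N:ℝ)^((3:ℝ)/2) * x^(-a))^2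
      = ((N:ℝ)^3) * (x^(-a) - (x+1)^(-a))^2 := by
    rw [← hNsq]; ring
  have hP : (0:ℝ) < x^(2*k) := by positivity
  calc ((N:ℝ)^((3:ℝ)/2) * (x+1)^(-a) - (N:ℝ)^((3:ℝ)/2) * x^(-a))^2 * (x+1)^(2*k)
      = (N:ℝ)^3 * (x^(-a) - (x+1)^(-a))^2 * (x+1)^(2*k) := by rw [hfactor]
    _ ≤ (N:ℝ)^3 * (a^2 * (x^(-a-1))^2) * (4^k * x^(2*k)) := by
        apply mul_le_mul ?_ hb (by positivity) (by positivity)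
        apply mul_le_mul_of_nonneg_left hsq (by positivity)
    _ = (N:ℝ)^3 * a^2 * 4^k * (x^(2*k) / x^(2*k+4)) := by
        rw [hx2]; ring
    _ = a^2 * 4^k * (N:ℝ)^3 / x^4 := by
        rw [pow_add]
        field_simp

/-- the test sequence -/
noncomputable def vv (k N M : ℕ) (n : ℕ) : ℝ :=
  if n = 0 then 0 else
  if n < N then (n:ℝ) ^ (-((2*(k:ℝ)-1)/2)) else
  if n ≤ M then (N:ℝ) ^ ((3:ℝ)/2) * (n:ℝ) ^ (-((k:ℝ)+1)) else 0

lemma vv_zero (k N M : ℕ) : vv k N M 0 = 0 := by simp [vv]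

lemma vv_tail (k N M : ℕ) (hN : 2 ≤ N) {n : ℕ} (hn : N ≤ n) (hnM : n ≤ M) :
    vv k N M n = (N:ℝ) ^ ((3:ℝ)/2) * (n:ℝ) ^ (-((k:ℝ)+1)) := by
  have h0 : n ≠ 0 := by omega
  have h1 : ¬ (n < N) := by omega
  simp [vv, h0, h1, hnM]

lemma vv_main (k N M : ℕ) (hN : 2 ≤ N) (hNM : N ≤ M) {n : ℕ} (hn : 1 ≤ n) (hnN : n ≤ N) :
    vv k N M n = (n:ℝ) ^ (-((2*(k:ℝ)-1)/2)) := by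
  have h0 : n ≠ 0 := by omega
  rcases lt_or_eq_of_le hnN with h | h
  · simp [vv, h0, h]
  · rw [h, vv_tail k N M hN (le_refl N) hNM]
    have hN0 : (0:ℝ) < (N:ℝ) := by positivity
    rw [← Real.rpow_add hN0]
    congr 1
    ring

lemma vv_beyond (k N M : ℕ) (hNM : N ≤ M) {n : ℕ} (hn : M < n) : vv k N M n = 0 := by
  have h0 : n ≠ 0 := by omega
  have h1 : ¬ (n < N) := by omega
  have h2 : ¬ (n ≤ M) := by omega
  simp [vv, h0, h1, h2]

lemma vv_nonneg (k N M : ℕ) (n : ℕ) : 0 ≤ vv k N M n := by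
  unfold vv
  split
  · exact le_refl 0
  split
  · positivity
  split
  · positivity
  · exact le_refl 0

noncomputable def gtel (n : ℕ) : ℝ := 1/((n:ℝ)-1)

/-- tail per-term telescoping bound -/
lemma tail_step (k N M n : ℕ) (hN2 : 2 ≤ N) (hn1 : N ≤ n) (hn2 : n < M) :
    (vv k N M (n+1) - vv k N M n)^2 * ((n:ℝ)+1)^(2*k)
      ≤ ((k:ℝ)+1)^2*4^k*(N:ℝ) * (1/((n:ℝ)-1) - 1/(n:ℝ)) := by
  have hnn2 : 2 ≤ n := le_trans hN2 hn1
  have hnr : (2:ℝ) ≤ (n:ℝ) := by exact_mod_cast hnn2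
  have hNn : (N:ℝ) ≤ (n:ℝ) := by exact_mod_cast hn1
  have hN0' : (0:ℝ) < (N:ℝ) := by
    have : (2:ℝ) ≤ (N:ℝ) := by exact_mod_cast hN2
    linarith
  rw [vv_tail k N M hN2 hn1 (le_of_lt hn2), vv_tail k N M hN2 (by omega) (by omega)]
  have h := aux_tail_term k N n (by omega)
  have hcast : ((n+1 : ℕ):ℝ) = (n:ℝ)+1 := by push_cast; ring
  rw [hcast]
  have hgd : 1/((n:ℝ)-1) - 1/(n:ℝ) = 1/(((n:ℝ)-1)*(n:ℝ)) := by
    have h1 : (n:ℝ)-1 ≠ 0 := by linarith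
    have h2 : (n:ℝ) ≠ 0 := by linarith
    field_simp
    ring
  rw [hgd]
  calc ((N:ℝ)^((3:ℝ)/2) * ((n:ℝ)+1)^(-((k:ℝ)+1)) - (N:ℝ)^((3:ℝ)/2) * (n:ℝ)^(-((k:ℝ)+1)))^2
          * ((n:ℝ)+1)^(2*k)
      ≤ ((k:ℝ)+1)^2 * 4^k * (N:ℝ)^3 / (n:ℝ)^4 := h
    _ ≤ ((k:ℝ)+1)^2*4^k*(N:ℝ) * (1/(((n:ℝ)-1)*(n:ℝ))) := by
        have ha : (0:ℝ) < ((n:ℝ)-1)*(n:ℝ) := by nlinarith [hnr]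
        have hbase : (N:ℝ)^3 / (n:ℝ)^4 ≤ (N:ℝ) * (1/(((n:ℝ)-1)*(n:ℝ))) := by
          rw [mul_one_div, div_le_div_iff₀ (by positivity) ha]
          have h1 : (N:ℝ)^2 ≤ (n:ℝ)^2 := pow_le_pow_left₀ (le_of_lt hN0') hNn 2
          have h2 : ((n:ℝ)-1)*(n:ℝ) ≤ (n:ℝ)^2 := by nlinarith [hnr]
          have h3 := mul_le_mul h1 h2 (le_of_lt ha) (by positivity)
          have h4 := mul_le_mul_of_nonneg_left h3 (le_of_lt hN0')
          nlinarith [h4]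
        calc ((k:ℝ)+1)^2 * 4^k * (N:ℝ)^3 / (n:ℝ)^4
            = ((k:ℝ)+1)^2 * 4^k * ((N:ℝ)^3 / (n:ℝ)^4) := by ring
          _ ≤ ((k:ℝ)+1)^2 * 4^k * ((N:ℝ) * (1/(((n:ℝ)-1)*(n:ℝ)))) := by
              apply mul_le_mul_of_nonneg_left hbase (by positivity)
          _ = ((k:ℝ)+1)^2*4^k*(N:ℝ) * (1/(((n:ℝ)-1)*(n:ℝ))) := by ring

/-- tail sum bound -/
lemma tail_sum (k N M : ℕ) (hN2 : 2 ≤ N) (hNM : N ≤ M) (hM2 : 2 ≤ M) :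
    ∑ n ∈ Finset.Ico N M, (vv k N M (n+1) - vv k N M n)^2 * ((n:ℝ)+1)^(2*k)
      ≤ 2*((k:ℝ)+1)^2*4^k := by
  have hN0' : (0:ℝ) < (N:ℝ) := by
    have : (2:ℝ) ≤ (N:ℝ) := by exact_mod_cast hN2
    linarith
  have hNr : (2:ℝ) ≤ (N:ℝ) := by exact_mod_cast hN2
  have hMr : (2:ℝ) ≤ (M:ℝ) := by exact_mod_cast hM2
  calc ∑ n ∈ Finset.Ico N M, (vv k N M (n+1) - vv k N M n)^2 * ((n:ℝ)+1)^(2*k)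
      ≤ ∑ n ∈ Finset.Ico N M,
          ((k:ℝ)+1)^2*4^k*(N:ℝ) * (gtel n - gtel (n+1)) := by
        apply Finset.sum_le_sum
        intro n hn
        rw [Finset.mem_Ico] at hn
        have h := tail_step k N M n hN2 hn.1 hn.2
        have e : gtel (n+1) = 1/(n:ℝ) := by
          unfold gtel
          push_cast
          ring_nf
        have e2 : gtel n = 1/((n:ℝ)-1) := rfl
        rw [e, e2]
        exact h
    _ = ((k:ℝ)+1)^2*4^k*(N:ℝ)
          * ∑ n ∈ Finset.Ico N M, (gtel n - gtel (n+1)) := by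
        rw [Finset.mul_sum]
    _ = ((k:ℝ)+1)^2*4^k*(N:ℝ) * (1/((N:ℝ)-1) - 1/((M:ℝ)-1)) := by
        rw [aux_tele gtel N M hNM]
        rfl
    _ ≤ 2*((k:ℝ)+1)^2*4^k := by
        have hgM : (0:ℝ) ≤ 1/((M:ℝ)-1) := div_nonneg zero_le_one (by linarith)
        have hgN : (N:ℝ)/((N:ℝ)-1) ≤ 2 := by
          rw [div_le_iff₀ (by linarith)]
          linarith
        calc ((k:ℝ)+1)^2*4^k*(N:ℝ) * (1/((N:ℝ)-1) - 1/((M:ℝ)-1))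
            ≤ ((k:ℝ)+1)^2*4^k*(N:ℝ) * (1/((N:ℝ)-1)) := by
              apply mul_le_mul_of_nonneg_left _ (by positivity)
              linarith
          _ = ((k:ℝ)+1)^2*4^k * ((N:ℝ)/((N:ℝ)-1)) := by ring
          _ ≤ ((k:ℝ)+1)^2*4^k * 2 := by
              apply mul_le_mul_of_nonneg_left hgN (by positivity)
          _ = 2*((k:ℝ)+1)^2*4^k := by ring

/-- main region per-term bound -/
lemma main_step (k N M n : ℕ) (hk : 1 ≤ k) (hN2 : 2 ≤ N) (hNM : N ≤ M)
    (hn1 : 1 ≤ n) (hn2 : n < N) :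
    (vv k N M (n+1) - vv k N M n)^2 * ((n:ℝ)+1)^(2*k)
      ≤ ((2*(k:ℝ)-1)/2)^2 * (1/((n:ℝ)+1))
        + (((2*(k:ℝ)-1)/2)^2*(2*(k:ℝ)+1)*4^k) * (1/(n:ℝ)^2) := by
  rw [vv_main k N M hN2 hNM hn1 (le_of_lt hn2),
      vv_main k N M hN2 hNM (by omega) (by omega)]
  have h := aux_main_term k n hk hn1
  have hcast : ((n+1 : ℕ):ℝ) = (n:ℝ)+1 := by push_cast; ring
  rw [hcast]
  have hsq : (((n:ℝ)+1) ^ (-((2*(k:ℝ)-1)/2)) - (n:ℝ) ^ (-((2*(k:ℝ)-1)/2)))^2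
      = ((n:ℝ) ^ (-((2*(k:ℝ)-1)/2)) - ((n:ℝ)+1) ^ (-((2*(k:ℝ)-1)/2)))^2 := by ring
  rw [hsq]
  calc ((n:ℝ) ^ (-((2*(k:ℝ)-1)/2)) - ((n:ℝ)+1) ^ (-((2*(k:ℝ)-1)/2)))^2 * ((n:ℝ)+1)^(2*k)
      ≤ ((2*(k:ℝ)-1)/2)^2 / ((n:ℝ)+1)
        + ((2*(k:ℝ)-1)/2)^2 * (2*(k:ℝ)+1) * 4^k / (n:ℝ)^2 := h
    _ = ((2*(k:ℝ)-1)/2)^2 * (1/((n:ℝ)+1))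
        + (((2*(k:ℝ)-1)/2)^2*(2*(k:ℝ)+1)*4^k) * (1/(n:ℝ)^2) := by ring

/-- boundary term bound -/
lemma boundary_bound (k N : ℕ) (hN2 : 2 ≤ N) :
    (vv k N (2^k*N^2) ((2^k*N^2)+1) - vv k N (2^k*N^2) (2^k*N^2))^2
        * (((2^k*N^2 : ℕ):ℝ)+1)^(2*k) ≤ 1 := by
  set M : ℕ := 2^k*N^2 with hM
  have h2k : 1 ≤ 2^k := Nat.one_le_two_pow
  have hNM : N ≤ M := by
    have h1 : N ≤ N^2 := by nlinarith
    calc N ≤ N^2 := h1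
      _ ≤ 2^k * N^2 := Nat.le_mul_of_pos_left _ (by omega)
  have hM2 : 2 ≤ M := le_trans hN2 hNM
  have hN0' : (0:ℝ) < (N:ℝ) := by
    have : (2:ℝ) ≤ (N:ℝ) := by exact_mod_cast hN2
    linarith
  have hMr2 : (2:ℝ) ≤ (M:ℝ) := by exact_mod_cast hM2
  have hM0' : (0:ℝ) < (M:ℝ) := by linarith
  have hM1 : (1:ℝ) ≤ (M:ℝ) := by linarith
  rw [vv_beyond k N M hNM (by omega : M < M+1), vv_tail k N M hN2 hNM (le_refl M)]
  have hMr : (M:ℝ) = 2^k * (N:ℝ)^2 := by rw [hM]; push_cast; ring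
  have hsq : (0 - (N:ℝ)^((3:ℝ)/2) * (M:ℝ)^(-((k:ℝ)+1)))^2
      = (N:ℝ)^3 * (1/(M:ℝ)^(2*k+2)) := by
    have e0 : (0 - (N:ℝ)^((3:ℝ)/2) * (M:ℝ)^(-((k:ℝ)+1)))^2
        = ((N:ℝ)^((3:ℝ)/2))^2 * ((M:ℝ)^(-((k:ℝ)+1)))^2 := by ring
    rw [e0, aux_sq_rpow hN0', aux_sq_rpow hM0']
    have e1 : (2:ℝ)*((3:ℝ)/2) = ((3:ℕ):ℝ) := by norm_num
    have e2 : (2:ℝ)*(-((k:ℝ)+1)) = -(((2*k+2:ℕ)):ℝ) := by push_cast; ring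
    rw [e1, e2, Real.rpow_natCast, Real.rpow_neg (le_of_lt hM0'), Real.rpow_natCast, one_div]
  rw [hsq]
  have hb : ((M:ℝ)+1)^(2*k) ≤ 4^k * (M:ℝ)^(2*k) := by
    calc ((M:ℝ)+1)^(2*k) ≤ (2*(M:ℝ))^(2*k) := by
          apply pow_le_pow_left₀ (by positivity) (by linarith)
      _ = 4^k * (M:ℝ)^(2*k) := by rw [mul_pow, pow_mul]; norm_num
  have hNr : (2:ℝ) ≤ (N:ℝ) := by exact_mod_cast hN2
  calc (N:ℝ)^3 * (1/(M:ℝ)^(2*k+2)) * ((M:ℝ)+1)^(2*k)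
      ≤ (N:ℝ)^3 * (1/(M:ℝ)^(2*k+2)) * (4^k * (M:ℝ)^(2*k)) := by
        apply mul_le_mul_of_nonneg_left hb (by positivity)
    _ = 4^k * (N:ℝ)^3 / (M:ℝ)^2 := by
        rw [pow_add]
        field_simp
    _ = 1/(N:ℝ) := by
        rw [hMr, mul_pow]
        have h4 : ((2:ℝ)^k)^2 = 4^k := by rw [← pow_mul, mul_comm k 2, pow_mul]; norm_num
        rw [h4, ← pow_mul]
        field_simp
    _ ≤ 1 := by
        rw [div_le_one hN0']
        linarith

/-- the value of the G-terms -/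
lemma G_val (k N M n : ℕ) (hk : 1 ≤ k) (hN2 : 2 ≤ N) (hNM : N ≤ M) (hn : n < N) :
    ((vv k N M (n+1))^2 / ((n:ℝ)+1)^2) * ((n:ℝ)+1)^(2*k) = 1/((n:ℝ)+1) := by
  rw [vv_main k N M hN2 hNM (by omega) (by omega : n+1 ≤ N)]
  have hcast : ((n+1 : ℕ):ℝ) = (n:ℝ)+1 := by push_cast; ring
  rw [hcast]
  have hx0 : (0:ℝ) < (n:ℝ)+1 := by positivity
  have e0 : ((((n:ℝ)+1) ^ (-((2*(k:ℝ)-1)/2)))^2 / ((n:ℝ)+1)^2) * ((n:ℝ)+1)^(2*k)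
      = ((n:ℝ)+1)^(2*(-((2*(k:ℝ)-1)/2)))
        * (((n:ℝ)+1)^(((2*k:ℕ)):ℝ) / ((n:ℝ)+1)^(((2:ℕ)):ℝ)) := by
    rw [aux_sq_rpow hx0, Real.rpow_natCast, Real.rpow_natCast]
    ring
  rw [e0, ← Real.rpow_sub hx0, ← Real.rpow_add hx0]
  have e1 : 2*(-((2*(k:ℝ)-1)/2)) + ((((2*k:ℕ)):ℝ) - (((2:ℕ)):ℝ)) = -1 := by
    push_cast; ring
  rw [e1, Real.rpow_neg_one, one_div]

/-- full F-sum bound -/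
lemma F_sum_bound (k N : ℕ) (hk : 1 ≤ k) (hN2 : 2 ≤ N) :
    ∑ n ∈ Finset.range ((2^k*N^2)+1),
        (vv k N (2^k*N^2) (n+1) - vv k N (2^k*N^2) n)^2 * ((n:ℝ)+1)^(2*k)
      ≤ ((2*(k:ℝ)-1)/2)^2 * (∑ i ∈ Finset.range N, 1/((i:ℝ)+1))
        + (2 + 2*(((2*(k:ℝ)-1)/2)^2*(2*(k:ℝ)+1)*4^k) + 2*((k:ℝ)+1)^2*4^k) := by
  have h2k : 1 ≤ 2^k := Nat.one_le_two_pow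
  have hNM : N ≤ 2^k*N^2 := by
    have h1 : N ≤ N^2 := by nlinarith
    calc N ≤ N^2 := h1
      _ ≤ 2^k * N^2 := Nat.le_mul_of_pos_left _ (by omega)
  have hM2 : 2 ≤ 2^k*N^2 := le_trans hN2 hNM
  set M : ℕ := 2^k*N^2
  set Ffun : ℕ → ℝ := fun n => (vv k N M (n+1) - vv k N M n)^2 * ((n:ℝ)+1)^(2*k) with hFfun
  have hsplit : ∑ n ∈ Finset.range (M+1), Ffun n
      = Ffun 0 + (∑ n ∈ Finset.Ico 1 N, Ffun n) + (∑ n ∈ Finset.Ico N M, Ffun n) + Ffun M := by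
    rw [Finset.range_eq_Ico]
    rw [← Finset.sum_Ico_consecutive Ffun (by omega : 0 ≤ 1) (by omega : 1 ≤ M+1)]
    rw [← Finset.sum_Ico_consecutive Ffun (by omega : 1 ≤ N) (by omega : N ≤ M+1)]
    rw [← Finset.sum_Ico_consecutive Ffun (hNM : N ≤ M) (by omega : M ≤ M+1)]
    have e1 : ∑ n ∈ Finset.Ico 0 1, Ffun n = Ffun 0 := by
      rw [Finset.sum_Ico_eq_sum_range]
      simp
    have e2 : ∑ n ∈ Finset.Ico M (M+1), Ffun n = Ffun M := by
      rw [Finset.sum_Ico_succ_top (le_refl M)]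
      simp
    rw [e1, e2]
    ring
  have hF0 : Ffun 0 = 1 := by
    rw [hFfun]
    simp only
    rw [vv_zero, vv_main k N M hN2 hNM (le_refl 1) (by omega)]
    push_cast
    rw [Real.one_rpow]
    norm_num
  have hFmain : ∑ n ∈ Finset.Ico 1 N, Ffun n
      ≤ ((2*(k:ℝ)-1)/2)^2 * (∑ i ∈ Finset.range N, 1/((i:ℝ)+1))
        + (((2*(k:ℝ)-1)/2)^2*(2*(k:ℝ)+1)*4^k) * 2 := by
    have hsum1 : ∑ n ∈ Finset.Ico 1 N, 1/((n:ℝ)+1) ≤ ∑ i ∈ Finset.range N, 1/((i:ℝ)+1) := by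
      apply Finset.sum_le_sum_of_subset_of_nonneg
      · rw [Finset.range_eq_Ico]
        exact Finset.Ico_subset_Ico (by omega) (le_refl N)
      · intro i _ _
        positivity
    have hsum2 : ∑ n ∈ Finset.Ico 1 N, 1/(n:ℝ)^2 ≤ 2 := by
      rw [Finset.sum_Ico_eq_sum_range]
      have e : ∀ i ∈ Finset.range (N-1), 1/((1+i:ℕ):ℝ)^2 = 1/((i:ℝ)+1)^2 := by
        intro i _
        push_cast
        ring_nf
      rw [Finset.sum_congr rfl e]
      exact aux_sum_inv_sq (N-1)
    calc ∑ n ∈ Finset.Ico 1 N, Ffun n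
        ≤ ∑ n ∈ Finset.Ico 1 N, (((2*(k:ℝ)-1)/2)^2 * (1/((n:ℝ)+1))
            + (((2*(k:ℝ)-1)/2)^2*(2*(k:ℝ)+1)*4^k) * (1/(n:ℝ)^2)) := by
          apply Finset.sum_le_sum
          intro n hn
          rw [Finset.mem_Ico] at hn
          exact main_step k N M n hk hN2 hNM hn.1 hn.2
      _ = ((2*(k:ℝ)-1)/2)^2 * (∑ n ∈ Finset.Ico 1 N, 1/((n:ℝ)+1))
            + (((2*(k:ℝ)-1)/2)^2*(2*(k:ℝ)+1)*4^k) * (∑ n ∈ Finset.Ico 1 N, 1/(n:ℝ)^2) := by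
          rw [Finset.sum_add_distrib, Finset.mul_sum, Finset.mul_sum]
      _ ≤ ((2*(k:ℝ)-1)/2)^2 * (∑ i ∈ Finset.range N, 1/((i:ℝ)+1))
            + (((2*(k:ℝ)-1)/2)^2*(2*(k:ℝ)+1)*4^k) * 2 := by
          apply add_le_add
          · exact mul_le_mul_of_nonneg_left hsum1 (by positivity)
          · exact mul_le_mul_of_nonneg_left hsum2 (by positivity)
  have hFtail : ∑ n ∈ Finset.Ico N M, Ffun n ≤ 2*((k:ℝ)+1)^2*4^k :=
    tail_sum k N M hN2 hNM hM2
  have hFM : Ffun M ≤ 1 := boundary_bound k N hN2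
  rw [hsplit]
  linarith [hF0, hFmain, hFtail, hFM]

/-- full G-sum lower bound -/
lemma G_sum_bound (k N M : ℕ) (hk : 1 ≤ k) (hN2 : 2 ≤ N) (hNM : N ≤ M) :
    ∑ i ∈ Finset.range N, 1/((i:ℝ)+1)
      ≤ ∑ n ∈ Finset.range (M+1), ((vv k N M (n+1))^2 / ((n:ℝ)+1)^2) * ((n:ℝ)+1)^(2*k) := by
  have e0 : ∑ i ∈ Finset.range N, 1/((i:ℝ)+1)
      = ∑ n ∈ Finset.range N, ((vv k N M (n+1))^2 / ((n:ℝ)+1)^2) * ((n:ℝ)+1)^(2*k) := by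
    apply Finset.sum_congr rfl
    intro n hn
    rw [Finset.mem_range] at hn
    exact (G_val k N M n hk hN2 hNM hn).symm
  rw [e0]
  apply Finset.sum_le_sum_of_subset_of_nonneg
  · exact Finset.range_subset_range.mpr (by omega)
  · intro i _ _
    positivity

theorem power_weight_hardy_sharp
    (k : ℕ) (hk : 1 ≤ k) (c : ℝ) (hc : c > (2 * (k : ℝ) - 1) ^ 2 / 4) :
    ∃ u : ℕ → ℂ, (Function.support u).Finite ∧ u 0 = 0 ∧
      ∑' n : ℕ, ‖u (n + 1) - u n‖ ^ 2 * ((n : ℝ) + 1) ^ (2 * k) <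
        c * ∑' n : ℕ, (‖u (n + 1)‖ ^ 2 / ((n : ℝ) + 1) ^ 2) * ((n : ℝ) + 1) ^ (2 * k) := by
  have hk1 : (1:ℝ) ≤ (k:ℝ) := by exact_mod_cast hk
  have hs2 : ((2*(k:ℝ)-1)/2)^2 = (2*(k:ℝ)-1)^2/4 := by ring
  have hcs : 0 < c - ((2*(k:ℝ)-1)/2)^2 := by rw [hs2]; linarith
  have hc0 : 0 < c := by nlinarith [sq_nonneg (2*(k:ℝ)-1)]
  set B : ℝ := 2 + 2*(((2*(k:ℝ)-1)/2)^2*(2*(k:ℝ)+1)*4^k) + 2*((k:ℝ)+1)^2*4^k with hB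
  obtain ⟨N, hNB, hN2⟩ : ∃ N : ℕ,
      B/(c - ((2*(k:ℝ)-1)/2)^2) < ∑ i ∈ Finset.range N, (1/((i:ℝ)+1)) ∧ 2 ≤ N := by
    have h := Real.tendsto_sum_range_one_div_nat_succ_atTop
    have h2 := (h.eventually_gt_atTop (B/(c - ((2*(k:ℝ)-1)/2)^2))).and
      (Filter.eventually_ge_atTop 2)
    obtain ⟨N, hN⟩ := h2.exists
    exact ⟨N, hN.1, hN.2⟩
  obtain ⟨M, hM⟩ : ∃ M : ℕ, M = 2^k * N^2 := ⟨_, rfl⟩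
  have h2k : 1 ≤ 2^k := Nat.one_le_two_pow
  have hNM : N ≤ M := by
    rw [hM]
    have h1 : N ≤ N^2 := by nlinarith
    calc N ≤ N^2 := h1
      _ ≤ 2^k * N^2 := Nat.le_mul_of_pos_left _ (by omega)
  refine ⟨fun n => ((vv k N M n : ℝ) : ℂ), ?_, ?_, ?_⟩
  · apply Set.Finite.subset (Finset.range (M+1)).finite_toSet
    intro n hn
    simp only [Function.mem_support] at hn
    simp only [Finset.coe_range, Set.mem_Iio]
    by_contra h
    push_neg at h
    apply hn
    rw [vv_beyond k N M hNM (by omega)]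
    norm_num
  · show ((vv k N M 0 : ℝ) : ℂ) = 0
    rw [vv_zero]
    norm_num
  · have hQeq : ∑' n : ℕ, ‖((vv k N M (n+1) : ℝ):ℂ) - ((vv k N M n : ℝ):ℂ)‖^2 * ((n:ℝ)+1)^(2*k)
        = ∑ n ∈ Finset.range (M+1), (vv k N M (n+1) - vv k N M n)^2 * ((n:ℝ)+1)^(2*k) := by
      rw [tsum_eq_sum (s := Finset.range (M+1)) ?_]
      · apply Finset.sum_congr rfl
        intro n _
        have e : ((vv k N M (n+1) : ℝ):ℂ) - ((vv k N M n : ℝ):ℂ)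
            = (((vv k N M (n+1) - vv k N M n : ℝ)):ℂ) := by push_cast; ring
        rw [e, Complex.norm_real, Real.norm_eq_abs, sq_abs]
      · intro n hn
        rw [Finset.mem_range, not_lt] at hn
        rw [vv_beyond k N M hNM (by omega), vv_beyond k N M hNM (by omega)]
        norm_num
    have hReq : ∑' n : ℕ, (‖((vv k N M (n+1) : ℝ):ℂ)‖^2 / ((n:ℝ)+1)^2) * ((n:ℝ)+1)^(2*k)
        = ∑ n ∈ Finset.range (M+1), ((vv k N M (n+1))^2 / ((n:ℝ)+1)^2) * ((n:ℝ)+1)^(2*k) := by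
      rw [tsum_eq_sum (s := Finset.range (M+1)) ?_]
      · apply Finset.sum_congr rfl
        intro n _
        rw [Complex.norm_real, Real.norm_eq_abs, sq_abs]
      · intro n hn
        rw [Finset.mem_range, not_lt] at hn
        rw [vv_beyond k N M hNM (by omega)]
        norm_num
    show ∑' n : ℕ, ‖((vv k N M (n+1) : ℝ):ℂ) - ((vv k N M n : ℝ):ℂ)‖^2 * ((n:ℝ)+1)^(2*k)
        < c * ∑' n : ℕ, (‖((vv k N M (n+1) : ℝ):ℂ)‖^2 / ((n:ℝ)+1)^2) * ((n:ℝ)+1)^(2*k)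
    rw [hQeq, hReq]
    have hFB := F_sum_bound k N hk hN2
    rw [← hM] at hFB
    have hGB := G_sum_bound k N M hk hN2 hNM
    have hBlt : B < (c - ((2*(k:ℝ)-1)/2)^2) * (∑ i ∈ Finset.range N, (1/((i:ℝ)+1))) := by
      rw [mul_comm]
      exact (div_lt_iff₀ hcs).mp hNB
    calc ∑ n ∈ Finset.range (M+1), (vv k N M (n+1) - vv k N M n)^2 * ((n:ℝ)+1)^(2*k)
        ≤ ((2*(k:ℝ)-1)/2)^2 * (∑ i ∈ Finset.range N, 1/((i:ℝ)+1)) + B := hFB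
      _ < ((2*(k:ℝ)-1)/2)^2 * (∑ i ∈ Finset.range N, 1/((i:ℝ)+1))
          + (c - ((2*(k:ℝ)-1)/2)^2) * (∑ i ∈ Finset.range N, (1/((i:ℝ)+1))) := by
          linarith
      _ = c * (∑ i ∈ Finset.range N, 1/((i:ℝ)+1)) := by ring
      _ ≤ c * ∑ n ∈ Finset.range (M+1), ((vv k N M (n+1))^2 / ((n:ℝ)+1)^2) * ((n:ℝ)+1)^(2*k) :=
          mul_le_mul_of_nonneg_left hGB (le_of_lt hc0)
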